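/- Let X be a nonempty compact metric space, μ a finite Borel measure on X with μ(X) > 0, and f, g : X → ℝ continuous. Then ∫_X normalize(f+g) dμ ≤ ∫_X normalize(f) dμ + ∫_X normalize(g) dμ, and the following are equivalent: (i) equality holds; (ii) argmin(f) ∩ argmin(g) ≠ ∅; (iii) argmin(f+g) = argmin(f) ∩ argmin(g). -/

import Mathlib

open MeasureTheory Set

/-- The (attained) minimum of `f` on a nonempty compact space. -/
noncomputable def minF {X : Type*} (f : X → ℝ) : ℝ := sInf (Set.range f)

/-- The (attained) maximum of `f` on a nonempty compact space. -/
noncomputable def maxF {X : Type*} (f : X → ℝ) : ℝ := sSup (Set.range f)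

/-- The oscillation `max f - min f`. -/
noncomputable def oscF {X : Type*} (f : X → ℝ) : ℝ := maxF f - minF f

/-- `normalize f = f - min f`. -/
noncomputable def normF {X : Type*} (f : X → ℝ) : X → ℝ := fun x => f x - minF f

/-- The minimizer set of `f`. -/
def argminF {X : Type*} (f : X → ℝ) : Set X := {x | f x = minF f}

/-- The maximizer set of `f`. -/
def argmaxF {X : Type*} (f : X → ℝ) : Set X := {x | f x = maxF f}

lemma minF_le {X : Type*} [TopologicalSpace X] [CompactSpace X] [Nonempty X]
    (f : X → ℝ) (hf : Continuous f) (x : X) : minF f ≤ f x := by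
  have hc : IsCompact (Set.range f) := isCompact_range hf
  exact csInf_le hc.bddBelow (Set.mem_range_self x)

lemma exists_minF {X : Type*} [TopologicalSpace X] [CompactSpace X] [Nonempty X]
    (f : X → ℝ) (hf : Continuous f) : ∃ x, f x = minF f := by
  have hc : IsCompact (Set.range f) := isCompact_range hf
  exact hc.sInf_mem (Set.range_nonempty f)

lemma intg {X : Type*} [MetricSpace X] [CompactSpace X] [MeasurableSpace X] [BorelSpace X]
    (μ : Measure X) [IsFiniteMeasure μ] (f : X → ℝ) (hf : Continuous f) : Integrable f μ :=
  hf.integrable_of_hasCompactSupport (isClosed_tsupport f).isCompact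

lemma int_normF {X : Type*} [MetricSpace X] [CompactSpace X] [Nonempty X]
    [MeasurableSpace X] [BorelSpace X]
    (μ : Measure X) [IsFiniteMeasure μ] (f : X → ℝ) (hf : Continuous f) :
    (∫ x, normF f x ∂μ) = (∫ x, f x ∂μ) - (μ Set.univ).toReal * minF f := by
  have : (∫ x, normF f x ∂μ) = (∫ x, f x ∂μ) - ∫ _x, minF f ∂μ := by
    unfold normF
    exact integral_sub (intg μ f hf) (integrable_const _)
  rw [this, integral_const, smul_eq_mul, measureReal_def]

theorem stmt_2 {X : Type*} [MetricSpace X] [CompactSpace X] [Nonempty X]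
    [MeasurableSpace X] [BorelSpace X]
    (μ : Measure X) [IsFiniteMeasure μ] (hμ : 0 < μ Set.univ)
    (f g : X → ℝ) (hf : Continuous f) (hg : Continuous g) :
    (∫ x, normF (fun x => f x + g x) x ∂μ) ≤
      (∫ x, normF f x ∂μ) + ∫ x, normF g x ∂μ ∧
    (((∫ x, normF (fun x => f x + g x) x ∂μ) =
        (∫ x, normF f x ∂μ) + ∫ x, normF g x ∂μ ↔
      (argminF f ∩ argminF g).Nonempty) ∧
     ((∫ x, normF (fun x => f x + g x) x ∂μ) =
        (∫ x, normF f x ∂μ) + ∫ x, normF g x ∂μ ↔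
      argminF (fun x => f x + g x) = argminF f ∩ argminF g)) := by
  set h : X → ℝ := fun x => f x + g x with hh
  have hhc : Continuous h := hf.add hg
  -- min(f+g) ≥ min f + min g
  obtain ⟨x₀, hx₀⟩ := exists_minF h hhc
  have hmin_ge : minF f + minF g ≤ minF h := by
    rw [← hx₀]
    exact add_le_add (minF_le f hf x₀) (minF_le g hg x₀)
  -- integral identity
  have key : (∫ x, normF f x ∂μ) + (∫ x, normF g x ∂μ) - (∫ x, normF h x ∂μ)
      = (μ Set.univ).toReal * (minF h - (minF f + minF g)) := by
    rw [int_normF μ f hf, int_normF μ g hg, int_normF μ h hhc]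
    have : (∫ x, h x ∂μ) = (∫ x, f x ∂μ) + ∫ x, g x ∂μ :=
      integral_add (intg μ f hf) (intg μ g hg)
    rw [this]; ring
  have hμpos : 0 < (μ Set.univ).toReal :=
    ENNReal.toReal_pos hμ.ne' (measure_ne_top μ _)
  have hineq : (∫ x, normF h x ∂μ) ≤ (∫ x, normF f x ∂μ) + ∫ x, normF g x ∂μ := by
    nlinarith [mul_nonneg hμpos.le (sub_nonneg.mpr hmin_ge)]
  -- integral equality ↔ min equality
  have heq_iff : ((∫ x, normF h x ∂μ) = (∫ x, normF f x ∂μ) + ∫ x, normF g x ∂μ)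
      ↔ minF h = minF f + minF g := by
    constructor
    · intro he
      have : (μ Set.univ).toReal * (minF h - (minF f + minF g)) = 0 := by linarith [key]
      have := (mul_eq_zero.mp this).resolve_left hμpos.ne'
      linarith
    · intro he; rw [he] at key; simp at key; linarith
  -- min equality ↔ nonempty intersection
  have hne_iff : minF h = minF f + minF g ↔ (argminF f ∩ argminF g).Nonempty := by
    constructor
    · intro he
      refine ⟨x₀, ?_, ?_⟩
      · have h1 := minF_le f hf x₀
        have h2 := minF_le g hg x₀
        have : f x₀ + g x₀ = minF f + minF g := by rw [← he, ← hx₀]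
        simp only [argminF, Set.mem_setOf_eq]; linarith
      · have h1 := minF_le f hf x₀
        have h2 := minF_le g hg x₀
        have : f x₀ + g x₀ = minF f + minF g := by rw [← he, ← hx₀]
        simp only [argminF, Set.mem_setOf_eq]; linarith
    · rintro ⟨x, hxf, hxg⟩
      have hle : minF h ≤ f x + g x := minF_le h hhc x
      simp only [argminF, Set.mem_setOf_eq] at hxf hxg
      rw [hxf, hxg] at hle
      linarith
  -- min equality ↔ argmin equation
  have harg_iff : minF h = minF f + minF g ↔
      argminF h = argminF f ∩ argminF g := by
    constructor
    · intro he
      ext x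
      simp only [argminF, Set.mem_setOf_eq, Set.mem_inter_iff]
      have h1 := minF_le f hf x
      have h2 := minF_le g hg x
      constructor
      · intro hx
        rw [he] at hx
        have hx' : f x + g x = minF f + minF g := hx
        exact ⟨by linarith, by linarith⟩
      · rintro ⟨ha, hb⟩
        rw [he]
        show f x + g x = minF f + minF g
        rw [ha, hb]
    · intro he
      have : x₀ ∈ argminF h := hx₀
      rw [he] at this
      obtain ⟨ha, hb⟩ := this
      simp only [argminF, Set.mem_setOf_eq] at ha hb
      rw [← hx₀]
      show f x₀ + g x₀ = minF f + minF g
      rw [ha, hb]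
  exact ⟨hineq, heq_iff.trans hne_iff, heq_iff.trans harg_iff⟩
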